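/- arXiv:2006.14522 — 3 statements merged into one kernel-verified Lean document; each statement's English description precedes it below -/
import Mathlib

section
/- For every k ∈ ℤ and λ ∈ ℂ, the function ṽ_{k,λ} := v_{k,λ}/ζ_k belongs to C([0,∞)) ∩ C²((0,∞)) and satisfies −(B_k ṽ')'(x) = λ·B_k(x)·ṽ(x) for all x > 0, together with ṽ(0) = 1 and lim_{x→0⁺} B_k(x)ṽ'(x) = 0. -/
open MeasureTheory Set Filter

/-- The standing assumptions on the coefficient `A`. -/
def ACond (A : ℝ → ℝ) : Prop :=
  ContinuousOn A (Set.Ici 0) ∧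
  ContDiffOn ℝ 1 A (Set.Ioi 0) ∧
  (∀ x > 0, 0 < A x) ∧
  IntegrableOn (fun x => 1 / A x) (Set.Ioc 0 1) ∧
  (∀ x > 0, 0 ≤ deriv A x / A x) ∧
  AntitoneOn (fun x => deriv A x / A x) (Set.Ioi 0)

/-- `v` solves `v'' + (A'/A) v' + (λ - (2kπ)²/A²) v = 0` on `(0,∞)`, `v(0)=1`, `(Av')(0⁺)=0`. -/
def IsEigenfun (A : ℝ → ℝ) (k : ℤ) (lam : ℂ) (v : ℝ → ℂ) : Prop :=
  ContinuousOn v (Set.Ici 0) ∧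
  ContDiffOn ℝ 2 v (Set.Ioi 0) ∧
  (∀ x > 0,
    deriv (deriv v) x + ((deriv A x / A x : ℝ) : ℂ) * deriv v x
      + (lam - (((2 * (k : ℝ) * Real.pi) ^ 2 / (A x) ^ 2 : ℝ) : ℂ)) * v x = 0) ∧
  v 0 = 1 ∧
  Filter.Tendsto (fun x => (A x : ℂ) * deriv v x) (nhdsWithin 0 (Set.Ioi 0)) (nhds 0)

/-- `ζ_k(x) = cosh(2kπ ∫₀ˣ dy/A(y))`. -/
noncomputable def zeta (A : ℝ → ℝ) (k : ℤ) (x : ℝ) : ℝ :=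
  Real.cosh (2 * (k : ℝ) * Real.pi * ∫ y in (0 : ℝ)..x, 1 / A y)

/-- `B_k(x) = A(x) ζ_k(x)²`. -/
noncomputable def Bfun (A : ℝ → ℝ) (k : ℤ) (x : ℝ) : ℝ :=
  A x * (zeta A k x) ^ 2

noncomputable def Ff (A : ℝ → ℝ) (x : ℝ) : ℝ := ∫ y in (0:ℝ)..x, 1 / A y

variable {A : ℝ → ℝ}

lemma invA_contOn (hA : ACond A) : ContinuousOn (fun x => 1 / A x) (Set.Ioi 0) :=
  ContinuousOn.div continuousOn_const (hA.1.mono fun _ hx => Set.mem_Ici.mpr (le_of_lt hx))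
    fun x hx => (hA.2.2.1 x hx).ne'

lemma integrableOn_invA (hA : ACond A) {b : ℝ} (hb : 0 ≤ b) :
    IntegrableOn (fun x => 1 / A x) (Set.Ioc 0 b) := by
  rcases le_or_gt b 1 with h | h
  · exact hA.2.2.2.1.mono_set (Set.Ioc_subset_Ioc le_rfl h)
  · rw [← Set.Ioc_union_Ioc_eq_Ioc zero_le_one h.le]
    refine hA.2.2.2.1.union ?_
    have hcont : ContinuousOn (fun x => 1 / A x) (Set.Icc 1 b) :=
      (invA_contOn hA).mono (fun x hx => lt_of_lt_of_le one_pos hx.1)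
    exact hcont.integrableOn_Icc.mono_set Set.Ioc_subset_Icc_self

lemma hasDerivAt_Ff (hA : ACond A) {x : ℝ} (hx : 0 < x) :
    HasDerivAt (Ff A) (1 / A x) x := by
  refine intervalIntegral.integral_hasDerivAt_right ?_ ?_ ?_
  · rw [intervalIntegrable_iff_integrableOn_Ioc_of_le hx.le]
    exact integrableOn_invA hA hx.le
  · exact ContinuousOn.stronglyMeasurableAtFilter isOpen_Ioi (invA_contOn hA) x hx
  · exact (invA_contOn hA).continuousAt (isOpen_Ioi.mem_nhds hx)

lemma contOn_Ff (hA : ACond A) : ContinuousOn (Ff A) (Set.Ici 0) := by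
  intro x hx
  have hx0 : (0:ℝ) ≤ x := hx
  have hb : (0:ℝ) ≤ x + 1 := by linarith
  have h1 : IntegrableOn (fun y => 1 / A y) (Set.uIcc 0 (x+1)) := by
    rw [Set.uIcc_of_le hb, integrableOn_Icc_iff_integrableOn_Ioc]
    exact integrableOn_invA hA hb
  have hc := intervalIntegral.continuousOn_primitive_interval h1
  rw [Set.uIcc_of_le hb] at hc
  have h2 : ContinuousWithinAt (Ff A) (Set.Icc 0 (x+1)) x := hc x ⟨hx0, by linarith⟩
  refine h2.mono_of_mem_nhdsWithin ?_
  rw [← Set.Ici_inter_Iic]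
  exact Filter.inter_mem self_mem_nhdsWithin
    (mem_nhdsWithin_of_mem_nhds (Iic_mem_nhds (by linarith)))

lemma Ff_zero : Ff A 0 = 0 := intervalIntegral.integral_same

lemma contDiffOn_Ff (hA : ACond A) : ContDiffOn ℝ 2 (Ff A) (Set.Ioi 0) := by
  have h2 : ((2:ℕ) : WithTop ℕ∞) = 1 + 1 := by norm_num
  rw [show ((2:ℕ) : WithTop ℕ∞) = 2 from rfl] at h2
  rw [h2, contDiffOn_succ_iff_deriv_of_isOpen isOpen_Ioi]
  refine ⟨fun x hx => (hasDerivAt_Ff hA hx).differentiableAt.differentiableWithinAt, ?_, ?_⟩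
  · simp
  · have : ContDiffOn ℝ 1 (fun x => 1 / A x) (Set.Ioi 0) :=
      ContDiffOn.div contDiffOn_const hA.2.1 fun x hx => (hA.2.2.1 x hx).ne'
    exact this.congr fun x hx => (hasDerivAt_Ff hA hx).deriv

noncomputable def zd (A : ℝ → ℝ) (k : ℤ) (x : ℝ) : ℝ :=
  2 * (k:ℝ) * Real.pi * Real.sinh (2 * (k:ℝ) * Real.pi * Ff A x) * (1 / A x)

lemma zeta_eq (A : ℝ → ℝ) (k : ℤ) :
    zeta A k = fun x => Real.cosh (2 * (k:ℝ) * Real.pi * Ff A x) := rfl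

lemma zeta_pos (A : ℝ → ℝ) (k : ℤ) (x : ℝ) : 0 < zeta A k x := Real.cosh_pos _

lemma zeta_zero : zeta A k 0 = 1 := by
  simp [zeta, intervalIntegral.integral_same]

lemma hasDerivAt_zeta (hA : ACond A) (k : ℤ) {x : ℝ} (hx : 0 < x) :
    HasDerivAt (zeta A k) (zd A k x) x := by
  rw [zeta_eq]
  have h1 := (hasDerivAt_Ff hA hx).const_mul (2 * (k:ℝ) * Real.pi)
  have h2 := (Real.hasDerivAt_cosh (2 * (k:ℝ) * Real.pi * Ff A x)).comp x h1
  exact h2.congr_deriv (by unfold zd; ring)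

lemma hasDerivAt_zd (hA : ACond A) (k : ℤ) {x : ℝ} (hx : 0 < x) :
    HasDerivAt (zd A k)
      (((2*(k:ℝ)*Real.pi * (Real.cosh (2*(k:ℝ)*Real.pi * Ff A x) *
          (2*(k:ℝ)*Real.pi * (1 / A x)))) * A x
        - 2*(k:ℝ)*Real.pi * Real.sinh (2*(k:ℝ)*Real.pi * Ff A x) * deriv A x) / (A x)^2) x := by
  have hAne : A x ≠ 0 := (hA.2.2.1 x hx).ne'
  have hA' : HasDerivAt A (deriv A x) x :=
    ((hA.2.1.differentiableOn one_ne_zero).differentiableAt (isOpen_Ioi.mem_nhds hx)).hasDerivAt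
  have h1 := (hasDerivAt_Ff hA hx).const_mul (2 * (k:ℝ) * Real.pi)
  have h2 := ((Real.hasDerivAt_sinh (2 * (k:ℝ) * Real.pi * Ff A x)).comp x h1).const_mul
      (2 * (k:ℝ) * Real.pi)
  have h3 := h2.div hA' hAne
  have heq : zd A k = fun y => 2*(k:ℝ)*Real.pi * (Real.sinh ∘ fun y => 2*(k:ℝ)*Real.pi * Ff A y) y / A y := by
    funext y; unfold zd; simp only [Function.comp]; ring
  rw [heq]
  exact h3

lemma contOn_zeta (hA : ACond A) (k : ℤ) : ContinuousOn (zeta A k) (Set.Ici 0) := by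
  rw [zeta_eq]
  exact Real.continuous_cosh.comp_continuousOn (continuousOn_const.mul (contOn_Ff hA))

lemma contDiffOn_zeta (hA : ACond A) (k : ℤ) : ContDiffOn ℝ 2 (zeta A k) (Set.Ioi 0) := by
  rw [zeta_eq]
  exact Real.contDiff_cosh.comp_contDiffOn (contDiffOn_const.mul (contDiffOn_Ff hA))

noncomputable def gfun (A : ℝ → ℝ) (k : ℤ) (v : ℝ → ℂ) (y : ℝ) : ℂ :=
  ((zeta A k y : ℝ) : ℂ) * ((A y : ℂ) * deriv v y)
    - ((2 * (k:ℝ) * Real.pi * Real.sinh (2 * (k:ℝ) * Real.pi * Ff A y) : ℝ) : ℂ) * v y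

/-- The normalized eigenfunction `ṽ_{k,λ} = v_{k,λ}/ζ_k` lies in
`C([0,∞)) ∩ C²((0,∞))` and satisfies `-(B_k ṽ')' = λ B_k ṽ` on `(0,∞)`, with `ṽ(0) = 1` and
`(B_k ṽ')(0⁺) = 0`. -/
theorem stmt1 (A : ℝ → ℝ) (hA : ACond A) (k : ℤ) (lam : ℂ) (v : ℝ → ℂ)
    (hv : IsEigenfun A k lam v) :
    ContinuousOn (fun x => v x / (zeta A k x : ℂ)) (Set.Ici 0) ∧
    ContDiffOn ℝ 2 (fun x => v x / (zeta A k x : ℂ)) (Set.Ioi 0) ∧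
    (∀ x > 0,
      -(deriv (fun y => (Bfun A k y : ℂ) * deriv (fun z => v z / (zeta A k z : ℂ)) y) x)
        = lam * (Bfun A k x : ℂ) * (v x / (zeta A k x : ℂ))) ∧
    v 0 / (zeta A k 0 : ℂ) = 1 ∧
    Filter.Tendsto (fun x => (Bfun A k x : ℂ) * deriv (fun z => v z / (zeta A k z : ℂ)) x)
      (nhdsWithin 0 (Set.Ioi 0)) (nhds 0) := by
  obtain ⟨hvc, hv2, hode, hv0, hvlim⟩ := hv
  have hApos := hA.2.2.1
  have hzne : ∀ x : ℝ, (zeta A k x : ℂ) ≠ 0 := fun x =>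
    Complex.ofReal_ne_zero.mpr (zeta_pos A k x).ne'
  have hζcontC : ContinuousOn (fun x => ((zeta A k x : ℝ) : ℂ)) (Set.Ici 0) :=
    Complex.continuous_ofReal.comp_continuousOn (contOn_zeta hA k)
  have hcont : ContinuousOn (fun x => v x / (zeta A k x : ℂ)) (Set.Ici 0) :=
    hvc.div hζcontC fun x _ => hzne x
  have hζcdC : ContDiffOn ℝ 2 (fun x => ((zeta A k x : ℝ) : ℂ)) (Set.Ioi 0) :=
    Complex.ofRealCLM.contDiff.comp_contDiffOn (contDiffOn_zeta hA k)
  have hcd : ContDiffOn ℝ 2 (fun x => v x / (zeta A k x : ℂ)) (Set.Ioi 0) := by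
    simp only [div_eq_mul_inv]
    exact hv2.mul (hζcdC.inv fun x _ => hzne x)
  -- derivatives of v
  have hv2' : ContDiffOn ℝ 1 (deriv v) (Set.Ioi 0) :=
    hv2.deriv_of_isOpen isOpen_Ioi (by norm_num)
  have hvd : ∀ x ∈ Set.Ioi (0:ℝ), HasDerivAt v (deriv v x) x := fun x hx =>
    ((hv2.differentiableOn (by norm_num)).differentiableAt (isOpen_Ioi.mem_nhds hx)).hasDerivAt
  have hvd2 : ∀ x ∈ Set.Ioi (0:ℝ), HasDerivAt (deriv v) (deriv (deriv v) x) x := fun x hx =>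
    ((hv2'.differentiableOn one_ne_zero).differentiableAt (isOpen_Ioi.mem_nhds hx)).hasDerivAt
  -- derivative of v / zeta
  have hvtd : ∀ x ∈ Set.Ioi (0:ℝ), HasDerivAt (fun z => v z / (zeta A k z : ℂ))
      ((deriv v x * (zeta A k x : ℂ) - v x * (zd A k x : ℂ)) / (zeta A k x : ℂ) ^ 2) x :=
    fun x hx => (hvd x hx).div ((hasDerivAt_zeta hA k hx).ofReal_comp) (hzne x)
  have hdvt : ∀ x ∈ Set.Ioi (0:ℝ), deriv (fun z => v z / (zeta A k z : ℂ)) x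
      = (deriv v x * (zeta A k x : ℂ) - v x * (zd A k x : ℂ)) / (zeta A k x : ℂ) ^ 2 :=
    fun x hx => (hvtd x hx).deriv
  -- B * vt' = g on Ioi 0
  have hwg : ∀ y ∈ Set.Ioi (0:ℝ),
      (Bfun A k y : ℂ) * deriv (fun z => v z / (zeta A k z : ℂ)) y = gfun A k v y := by
    intro y hy
    have hAneC : (A y : ℂ) ≠ 0 := Complex.ofReal_ne_zero.mpr (hApos y hy).ne'
    rw [hdvt y hy]
    simp only [Bfun, zd, gfun]
    push_cast
    field_simp [hAneC, hzne y]
  refine ⟨hcont, hcd, ?_, ?_, ?_⟩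
  · -- the ODE
    intro x hxpos
    have hx : x ∈ Set.Ioi (0:ℝ) := hxpos
    have hAne : A x ≠ 0 := (hApos x hxpos).ne'
    have hAneC : (A x : ℂ) ≠ 0 := Complex.ofReal_ne_zero.mpr hAne
    have hA' : HasDerivAt A (deriv A x) x :=
      ((hA.2.1.differentiableOn one_ne_zero).differentiableAt (isOpen_Ioi.mem_nhds hx)).hasDerivAt
    have hterm1 : HasDerivAt (fun y => ((zeta A k y : ℝ) : ℂ) * ((A y : ℂ) * deriv v y))
        ((zd A k x : ℂ) * ((A x : ℂ) * deriv v x)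
          + ((zeta A k x : ℝ) : ℂ) * (((deriv A x : ℝ) : ℂ) * deriv v x
              + (A x : ℂ) * deriv (deriv v) x)) x :=
      ((hasDerivAt_zeta hA k hx).ofReal_comp).mul ((hA'.ofReal_comp).mul (hvd2 x hx))
    have hs : HasDerivAt
        (fun y => ((2 * (k:ℝ) * Real.pi * Real.sinh (2 * (k:ℝ) * Real.pi * Ff A y) : ℝ) : ℂ))
        (((2 * (k:ℝ) * Real.pi * (Real.cosh (2 * (k:ℝ) * Real.pi * Ff A x)
            * (2 * (k:ℝ) * Real.pi * (1 / A x))) : ℝ) : ℂ)) x := by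
      have h1 := (hasDerivAt_Ff hA hxpos).const_mul (2 * (k:ℝ) * Real.pi)
      have h2 := ((Real.hasDerivAt_sinh (2 * (k:ℝ) * Real.pi * Ff A x)).comp x h1).const_mul
          (2 * (k:ℝ) * Real.pi)
      exact h2.ofReal_comp
    have hterm2 := hs.mul (hvd x hx)
    have hgd : HasDerivAt (gfun A k v) _ x := hterm1.sub hterm2
    have hdw : deriv (fun y => (Bfun A k y : ℂ) * deriv (fun z => v z / (zeta A k z : ℂ)) y) x
        = deriv (gfun A k v) x := by
      apply Filter.EventuallyEq.deriv_eq
      filter_upwards [isOpen_Ioi.mem_nhds hx] with y hy using hwg y hy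
    rw [hdw, hgd.deriv]
    have hode' := hode x hxpos
    have hV2 : deriv (deriv v) x = -((deriv A x / A x : ℝ) : ℂ) * deriv v x
        - (lam - (((2 * (k : ℝ) * Real.pi) ^ 2 / (A x) ^ 2 : ℝ) : ℂ)) * v x := by
      linear_combination hode'
    have hZ : Real.cosh (2 * (k:ℝ) * Real.pi * Ff A x) = zeta A k x := rfl
    rw [hV2, hZ]
    simp only [Bfun, zd]
    push_cast
    field_simp [hAneC, hzne x]
    ring
  · simp [zeta_zero, hv0]
  · -- boundary limit
    have hFlim : Tendsto (Ff A) (nhdsWithin 0 (Set.Ioi 0)) (nhds 0) := by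
      have h2 : Tendsto (Ff A) (nhdsWithin 0 (Set.Ioi 0)) (nhds (Ff A 0)) :=
        ((contOn_Ff hA) 0 Set.self_mem_Ici).mono Set.Ioi_subset_Ici_self
      rwa [Ff_zero] at h2
    have hvlim0 : Tendsto v (nhdsWithin 0 (Set.Ioi 0)) (nhds 1) := by
      have h1 : Tendsto v (nhdsWithin 0 (Set.Ioi 0)) (nhds (v 0)) :=
        (hvc 0 Set.self_mem_Ici).mono Set.Ioi_subset_Ici_self
      rwa [hv0] at h1
    have hZlim : Tendsto (fun x => ((zeta A k x : ℝ) : ℂ)) (nhdsWithin 0 (Set.Ioi 0)) (nhds 1) := by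
      have h1 := (contOn_zeta hA k 0 Set.self_mem_Ici).mono Set.Ioi_subset_Ici_self
      rw [ContinuousWithinAt, zeta_zero] at h1
      have h2 := (Complex.continuous_ofReal.tendsto 1).comp h1
      simpa only [Function.comp_def, Complex.ofReal_one] using h2
    have hSlim : Tendsto
        (fun x => ((2 * (k:ℝ) * Real.pi * Real.sinh (2 * (k:ℝ) * Real.pi * Ff A x) : ℝ) : ℂ))
        (nhdsWithin 0 (Set.Ioi 0)) (nhds 0) := by
      have h1 : Tendsto (fun x => 2 * (k:ℝ) * Real.pi * Ff A x)
          (nhdsWithin 0 (Set.Ioi 0)) (nhds 0) := by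
        simpa only [mul_zero] using hFlim.const_mul (2 * (k:ℝ) * Real.pi)
      have h2 : Tendsto (fun x => Real.sinh (2 * (k:ℝ) * Real.pi * Ff A x))
          (nhdsWithin 0 (Set.Ioi 0)) (nhds 0) := by
        have h2 := (Real.continuous_sinh.tendsto 0).comp h1
        simpa only [Function.comp_def, Real.sinh_zero] using h2
      have h3 : Tendsto (fun x => 2 * (k:ℝ) * Real.pi * Real.sinh (2 * (k:ℝ) * Real.pi * Ff A x))
          (nhdsWithin 0 (Set.Ioi 0)) (nhds 0) := by
        simpa only [mul_zero] using h2.const_mul (2 * (k:ℝ) * Real.pi)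
      have h4 := (Complex.continuous_ofReal.tendsto 0).comp h3
      simpa only [Function.comp_def, Complex.ofReal_zero] using h4
    have hglim : Tendsto (gfun A k v) (nhdsWithin 0 (Set.Ioi 0)) (nhds 0) := by
      have h5 := (hZlim.mul hvlim).sub (hSlim.mul hvlim0)
      simp only [one_mul, mul_one, zero_mul, mul_zero, sub_zero] at h5
      exact h5
    refine hglim.congr' ?_
    exact Filter.eventuallyEq_of_mem self_mem_nhdsWithin (fun y hy => (hwg y hy).symm)
end

section
/- Fix η ≥ 0 and points ξ₁ = (x₁,z₁), ξ₂ = (x₂,z₂) of M^℘ = [0,∞) × I. Suppose π^℘ is a Borel probability measure on I with ψ_η(z₁)·ψ_η(z₂) = ∫_I ψ_η dπ^℘, and π^{[η]} is a Borel probability measure on [0,∞) with ṽ_{λ,η}(x₁)·ṽ_{λ,η}(x₂) = ∫_{[0,∞)} ṽ_{λ,η} dπ^{[η]} for all λ ∈ ℂ. Then the positive measure γ on M^℘ defined by γ(d(x₃,z₃)) := (ζ_η(x₁)ζ_η(x₂)/ζ_η(x₃))·π^{[η]}(dx₃)·π^℘(dz₃) satisfies w^℘_{λ,η}(ξ₁)·w^℘_{λ,η}(ξ₂)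 = ∫_{M^℘} w^℘_{λ,η}(ξ₃) γ(dξ₃) for all λ ∈ ℂ. -/
open MeasureTheory Set Filter
open scoped ENNReal NNReal

lemma measurable_of_countable_support {g : ℝ → ℝ} {s : Set ℝ} (hs : s.Countable)
    (h : ∀ x ∉ s, g x = 0) : Measurable g := by
  intro t ht
  by_cases h0 : (0:ℝ) ∈ t
  · have he : g ⁻¹' t = (s ∩ g ⁻¹' t) ∪ sᶜ := by
      ext x
      constructor
      · intro hx
        by_cases hxs : x ∈ s
        · exact Or.inl ⟨hxs, hx⟩
        · exact Or.inr hxs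
      · rintro (⟨_, hx⟩ | hx)
        · exact hx
        · show g x ∈ t
          rw [h x hx]; exact h0
    rw [he]
    exact ((hs.mono inter_subset_left).measurableSet).union hs.measurableSet.compl
  · have hsub : g ⁻¹' t ⊆ s := by
      intro x hx
      by_contra hxs
      have : g x ∈ t := hx
      rw [h x hxs] at this
      exact h0 this
    exact (hs.mono hsub).measurableSet

lemma measurable_primitive (f : ℝ → ℝ) :
    Measurable (fun x => ∫ t in (0:ℝ)..x, f t) := by
  classical
  set F : ℝ → ℝ := fun x => ∫ t in (0:ℝ)..x, f t with hF
  set T : Set ℝ := {x | IntervalIntegrable f volume 0 x} with hTdef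
  have hT0 : (0:ℝ) ∈ T := IntervalIntegrable.refl
  have hTmem : ∀ {m n : ℝ}, m ∈ T → n ∈ T → IntervalIntegrable f volume m n :=
    fun hm hn => hm.symm.trans hn
  have hmin : ∀ {a : ℝ}, a ∈ T → min a 0 ∈ T := by
    intro a ha
    rcases min_choice a 0 with h | h <;> rw [h]
    exacts [ha, hT0]
  have hmax : ∀ {a : ℝ}, a ∈ T → max a 0 ∈ T := by
    intro a ha
    rcases max_choice a 0 with h | h <;> rw [h]
    exacts [ha, hT0]
  have hTord : T.OrdConnected := by
    refine ⟨fun x hx y hy z hz => ?_⟩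
    have hbig : IntervalIntegrable f volume (min x 0) (max y 0) := hTmem (hmin hx) (hmax hy)
    have : IntervalIntegrable f volume 0 z := by
      apply hbig.mono_set
      apply uIcc_subset_uIcc
      · rw [uIcc_of_le (le_trans (min_le_right x 0) (le_max_right y 0))]
        exact ⟨min_le_right x 0, le_max_right y 0⟩
      · rw [uIcc_of_le (le_trans (min_le_right x 0) (le_max_right y 0))]
        exact ⟨le_trans (min_le_left x 0) hz.1, le_trans hz.2 (le_max_left y 0)⟩
    exact this
  have hzero : ∀ x ∉ T, F x = 0 := fun x hx => intervalIntegral.integral_undef hx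
  set U := interior T with hU
  have hUT : U ⊆ T := interior_subset
  have hcontat : ∀ x0 ∈ U, ContinuousAt F x0 := by
    intro x0 hx0
    obtain ⟨ε, hε, hball⟩ := Metric.isOpen_iff.1 isOpen_interior x0 hx0
    have hballT : Metric.ball x0 ε ⊆ T := hball.trans interior_subset
    rw [Real.ball_eq_Ioo] at hballT
    have hml : x0 - ε/2 ∈ T := hballT ⟨by linarith, by linarith⟩
    have hmr : x0 + ε/2 ∈ T := hballT ⟨by linarith, by linarith⟩
    have hint : IntervalIntegrable f volume (min 0 (x0 - ε/2)) (max 0 (x0 + ε/2)) := by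
      have h1 : min 0 (x0 - ε/2) ∈ T := by
        rcases min_choice (0:ℝ) (x0 - ε/2) with h | h <;> rw [h]
        exacts [hT0, hml]
      have h2 : max 0 (x0 + ε/2) ∈ T := by
        rcases max_choice (0:ℝ) (x0 + ε/2) with h | h <;> rw [h]
        exacts [hT0, hmr]
      exact hTmem h1 h2
    have hcw : ContinuousWithinAt F (Icc (x0 - ε/2) (x0 + ε/2)) x0 :=
      intervalIntegral.continuousWithinAt_primitive (measure_singleton x0) hint
    exact hcw.continuousAt (Icc_mem_nhds (by linarith) (by linarith))
  have hcontOn : ContinuousOn F U := fun x hx => (hcontat x hx).continuousWithinAt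
  -- the leftover set is countable
  set P := T \ U with hP
  have haux : ∀ a ∈ P, ∀ b ∈ T, 0 < a → a < b → False := by
    intro a ha b hb h0 hab
    have : Ioo 0 b ⊆ T := (Ioo_subset_Icc_self).trans (hTord.out hT0 hb)
    have : a ∈ U := interior_maximal this isOpen_Ioo ⟨h0, hab⟩
    exact ha.2 this
  have haux' : ∀ a ∈ P, ∀ b ∈ T, a < 0 → b < a → False := by
    intro a ha b hb h0 hab
    have : Ioo b 0 ⊆ T := (Ioo_subset_Icc_self).trans (hTord.out hb hT0)
    have : a ∈ U := interior_maximal this isOpen_Ioo ⟨hab, h0⟩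
    exact ha.2 this
  have hPc : P.Countable := by
    have hsub : P ⊆ (P ∩ Ioi 0) ∪ ({0} ∪ (P ∩ Iio 0)) := by
      intro x hx
      rcases lt_trichotomy x 0 with h | h | h
      · exact Or.inr (Or.inr ⟨hx, h⟩)
      · exact Or.inr (Or.inl (by simp [h]))
      · exact Or.inl ⟨hx, h⟩
    refine Set.Countable.mono hsub ?_
    refine Set.Countable.union ?_ (Set.Countable.union (countable_singleton 0) ?_)
    · refine Set.Subsingleton.countable ?_
      intro a ha b hb
      by_contra hne
      rcases lt_or_gt_of_ne hne with h | h
      · exact haux a ha.1 b hb.1.1 ha.2 h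
      · exact haux b hb.1 a ha.1.1 hb.2 h
    · refine Set.Subsingleton.countable ?_
      intro a ha b hb
      by_contra hne
      rcases lt_or_gt_of_ne hne with h | h
      · exact haux' b hb.1 a ha.1.1 hb.2 h
      · exact haux' a ha.1 b hb.1.1 ha.2 h
  have hdecomp : F = fun x => U.piecewise F (fun _ => 0) x + P.indicator F x := by
    funext x
    by_cases hxU : x ∈ U
    · simp [Set.piecewise, Set.indicator, hxU, hP]
    · by_cases hxT : x ∈ T
      · simp [Set.piecewise, Set.indicator, hxU, hP, hxT]
      · have hxP : x ∉ P := fun h => hxT h.1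
        simp [Set.piecewise, Set.indicator, hxU, hxP, hzero x hxT]
  rw [hdecomp]
  refine Measurable.add ?_ ?_
  · exact hcontOn.measurable_piecewise continuousOn_const isOpen_interior.measurableSet
  · refine measurable_of_countable_support hPc ?_
    intro x hx
    exact Set.indicator_of_notMem hx F

/-- `ζ_η(x) = cosh(√η ∫₀ˣ dy/A(y))`. -/
noncomputable def zetaEta (A : ℝ → ℝ) (η : ℝ) (x : ℝ) : ℝ :=
  Real.cosh (Real.sqrt η * ∫ y in (0 : ℝ)..x, 1 / A y)

/-- `w^℘_{λ,η}(x,z) = ψ_η(z) ζ_η(x) ṽ_{λ,η}(x)`. -/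
noncomputable def wP (A : ℝ → ℝ) (η : ℝ) (ψ : ℝ → ℝ) (vt : ℂ → ℝ → ℂ)
    (lam : ℂ) (ξ : ℝ × ℝ) : ℂ :=
  (ψ ξ.2 : ℂ) * (zetaEta A η ξ.1 : ℂ) * vt lam ξ.1

/-- If `π^℘` realizes the product formula for `ψ_η` at `z₁, z₂ ∈ I` and
`π^{[η]}` realizes the product formula for `ṽ_{λ,η}` at `x₁, x₂`, then the measure
`γ(d(x₃,z₃)) = (ζ_η(x₁)ζ_η(x₂)/ζ_η(x₃)) π^{[η]}(dx₃) π^℘(dz₃)` realizes the product formula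
for `w^℘_{λ,η}` at `ξ₁ = (x₁,z₁)`, `ξ₂ = (x₂,z₂)`, for all `λ ∈ ℂ`. -/
theorem stmt14 (A : ℝ → ℝ) (hA : ACond A) (η : ℝ) (hη : 0 ≤ η)
    (I : Set ℝ) (ψ : ℝ → ℝ) (hψm : Measurable ψ)
    (vt : ℂ → ℝ → ℂ) (hvtm : ∀ lam : ℂ, Measurable (vt lam))
    (x₁ x₂ : ℝ) (hx₁ : 0 ≤ x₁) (hx₂ : 0 ≤ x₂) (z₁ z₂ : ℝ) (hz₁ : z₁ ∈ I) (hz₂ : z₂ ∈ I)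
    (πP : Measure ℝ) (hπP : IsProbabilityMeasure πP) (hπPI : πP Iᶜ = 0)
    (hψint : Integrable ψ πP)
    (hψprod : ψ z₁ * ψ z₂ = ∫ z, ψ z ∂πP)
    (πη : Measure ℝ) (hπη : IsProbabilityMeasure πη)
    (hvtint : ∀ lam : ℂ, Integrable (vt lam) πη)
    (hvtprod : ∀ lam : ℂ, vt lam x₁ * vt lam x₂ = ∫ x, vt lam x ∂πη) :
    ∀ lam : ℂ,
      wP A η ψ vt lam (x₁, z₁) * wP A η ψ vt lam (x₂, z₂)
        = ∫ ξ₃, wP A η ψ vt lam ξ₃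
            ∂((πη.withDensity
                (fun x₃ => ENNReal.ofReal (zetaEta A η x₁ * zetaEta A η x₂ / zetaEta A η x₃))).prod
              πP) := by
  intro lam
  have hζpos : ∀ x, 0 < zetaEta A η x := fun x => Real.cosh_pos _
  have hζmeas : Measurable (zetaEta A η) := by
    have : Measurable (fun x => Real.sqrt η * ∫ y in (0:ℝ)..x, 1 / A y) :=
      (measurable_primitive (fun y => 1 / A y)).const_mul _
    exact Real.continuous_cosh.measurable.comp this
  set ζ := zetaEta A η with hζ
  set c : ℝ := ζ x₁ * ζ x₂ with hc
  have hcpos : 0 < c := mul_pos (hζpos x₁) (hζpos x₂)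
  have hdmeas : Measurable (fun x => (c / ζ x).toNNReal) :=
    (measurable_const.div hζmeas).real_toNNReal
  have hcoe : (fun x₃ => ENNReal.ofReal (ζ x₁ * ζ x₂ / ζ x₃))
      = fun x₃ => ((c / ζ x₃).toNNReal : ℝ≥0∞) := rfl
  have hprod : ∫ ξ₃, wP A η ψ vt lam ξ₃
      ∂((πη.withDensity (fun x₃ => ENNReal.ofReal (ζ x₁ * ζ x₂ / ζ x₃))).prod πP)
      = (∫ x, (ζ x : ℂ) * vt lam x ∂(πη.withDensity (fun x₃ => ENNReal.ofReal (ζ x₁ * ζ x₂ / ζ x₃))))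
        * ∫ z, (ψ z : ℂ) ∂πP := by
    rw [← integral_prod_mul]
    apply integral_congr_ae
    filter_upwards with ξ
    simp only [wP]
    ring
  have hinner : (∫ x, (ζ x : ℂ) * vt lam x
      ∂(πη.withDensity (fun x₃ => ENNReal.ofReal (ζ x₁ * ζ x₂ / ζ x₃))))
      = (c : ℂ) * (vt lam x₁ * vt lam x₂) := by
    rw [hcoe, integral_withDensity_eq_integral_smul hdmeas]
    have hpt : ∀ x, (c / ζ x).toNNReal • ((ζ x : ℂ) * vt lam x) = (c : ℂ) * vt lam x := by
      intro x
      rw [NNReal.smul_def, Real.coe_toNNReal _ (div_nonneg hcpos.le (hζpos x).le)]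
      rw [Complex.real_smul, Complex.ofReal_div]
      have hne : (ζ x : ℂ) ≠ 0 := Complex.ofReal_ne_zero.mpr (hζpos x).ne'
      field_simp
    simp_rw [hpt]
    rw [integral_const_mul _, ← hvtprod lam]
  rw [hprod, hinner]
  have hψc : ∫ z, (ψ z : ℂ) ∂πP = ((ψ z₁ * ψ z₂ : ℝ) : ℂ) := by
    rw [hψprod]
    exact integral_ofReal
  rw [hψc]
  simp only [wP, hc]
  push_cast
  ring
end

section
/- Suppose in addition that lim_{x→∞} p(x) = ∞. Let c ≥ 0 and let τ be a positive Borel measure on (0,∞) which is finite on the complement of every neighbourhood of 0 and satisfies ∫_{(0,∞)} (1 − v_λ(x)) τ(dx) < ∞ for every λ ≥ 0; set ψ(λ) := cλ + ∫_{(0,∞)} (1 − v_λ(x)) τ(dx). Suppose that for each t > 0 there exists a Borel probability measure μ_t on [0,∞) such that ∫_{[0,∞)} v_λ dμ_t = e^{−tψ(λ)} for all λ ≥ 0. Then there exists a constant C > 0, independent of λ, such that ψ(λ) ≤ C(1+λ) for all λ ≥ 0. -/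
open MeasureTheory Set Filter

/-- Under the standing assumptions on the Sturm-Liouville coefficient `p`
(positivity, local absolute continuity, `0` regular/entrance, the structural `η`-condition)
and on the eigenfunctions `v_λ` (`|v_λ| ≤ 1`, `v_λ(x) → 0` as `x → ∞` for `λ > 0`), if
`lim_{x→∞} p(x) = ∞`, `τ` is a positive measure on `(0,∞)` finite away from `0` with
`∫ (1 − v_λ) dτ < ∞`, `ψ(λ) = cλ + ∫ (1 − v_λ) dτ`, and for each `t > 0` there is a
probability measure `μ_t` with `∫ v_λ dμ_t = e^{−tψ(λ)}`, then `ψ(λ) ≤ C(1+λ)` for some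
constant `C > 0` independent of `λ`. -/
theorem stmt17 (p : ℝ → ℝ)
    (hppos : ∀ x > 0, 0 < p x)
    (hpcont : ContinuousOn p (Set.Ioi 0))
    -- local absolute continuity of `p` on `(0,∞)`, via the FTC characterization:
    (hpAC : ∀ c x : ℝ, 0 < c → c ≤ x →
      IntervalIntegrable (deriv p) volume c x ∧ p x - p c = ∫ t in c..x, deriv p t)
    -- `0` is a regular or entrance endpoint:
    (h0 : IntegrableOn (fun y => (∫ x in y..1, 1 / p x) * p y) (Set.Ioc 0 1))
    -- the structural η-condition:
    (hη : ∃ η : ℝ → ℝ, ContDiffOn ℝ 1 η (Set.Ioi 0) ∧ (∀ x > 0, 0 ≤ η x) ∧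
      AntitoneOn (fun x => deriv p x / p x - η x) (Set.Ioi 0) ∧
      Filter.Tendsto (fun x => deriv p x / p x - η x) Filter.atTop (nhds 0) ∧
      AntitoneOn (fun x => (1 / 2) * deriv η x - (1 / 4) * (η x) ^ 2
        + (deriv p x / (2 * p x)) * η x) (Set.Ioi 0))
    (hpinf : Filter.Tendsto p Filter.atTop Filter.atTop)
    -- the eigenfunctions `v_λ`, `λ ≥ 0`:
    (v : ℝ → ℝ → ℝ)
    (hvsol : ∀ lam : ℝ, 0 ≤ lam →
      ContinuousOn (v lam) (Set.Ici 0) ∧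
      (∀ x > 0, DifferentiableAt ℝ (v lam) x) ∧
      (∀ x > 0, HasDerivAt (fun y => p y * deriv (v lam) y)
        (-(lam * p x * v lam x)) x) ∧
      v lam 0 = 1 ∧
      Filter.Tendsto (fun x => p x * deriv (v lam) x) (nhdsWithin 0 (Set.Ioi 0)) (nhds 0))
    (hvbd : ∀ lam : ℝ, 0 ≤ lam → ∀ x : ℝ, 0 ≤ x → |v lam x| ≤ 1)
    (hvlim : ∀ lam : ℝ, 0 < lam → Filter.Tendsto (v lam) Filter.atTop (nhds 0))
    -- the data defining `ψ`:
    (c : ℝ) (hc : 0 ≤ c)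
    (τ : Measure ℝ) (hτconc : τ (Set.Ioi (0 : ℝ))ᶜ = 0)
    (hτfin : ∀ ε : ℝ, 0 < ε → τ (Set.Ici ε) < ⊤)
    (hτint : ∀ lam : ℝ, 0 ≤ lam → Integrable (fun x => 1 - v lam x) τ)
    -- the convolution semigroup hypothesis `∫ v_λ dμ_t = e^{−tψ(λ)}`:
    (hμ : ∀ t : ℝ, 0 < t → ∃ μ : Measure ℝ, IsProbabilityMeasure μ ∧
      μ (Set.Ici (0 : ℝ))ᶜ = 0 ∧
      ∀ lam : ℝ, 0 ≤ lam →
        ∫ x, v lam x ∂μ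
          = Real.exp (-(t * (c * lam + ∫ x, (1 - v lam x) ∂τ)))) :
    ∃ C : ℝ, 0 < C ∧ ∀ lam : ℝ, 0 ≤ lam →
      c * lam + (∫ x, (1 - v lam x) ∂τ) ≤ C * (1 + lam) := by
  classical
  obtain ⟨hv1c, hv1d, hv1ode, hv10, hv1g⟩ := hvsol 1 zero_le_one
  -- continuity of the derivative on `(0,∞)`
  have hdc : ∀ lam : ℝ, 0 ≤ lam → ContinuousOn (deriv (v lam)) (Set.Ioi 0) := by
    intro lam hlam
    obtain ⟨hvc, hvd, hvode, hv0, hvg⟩ := hvsol lam hlam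
    intro x hx
    have hx0 : (0 : ℝ) < x := hx
    have hg : ContinuousAt (fun y => p y * deriv (v lam) y) x := (hvode x hx0).continuousAt
    have hp : ContinuousAt p x := hpcont.continuousAt (isOpen_Ioi.mem_nhds hx)
    have hdiv : ContinuousAt (fun y => (p y * deriv (v lam) y) / p y) x :=
      hg.div hp (hppos x hx0).ne'
    have heq : (fun y => (p y * deriv (v lam) y) / p y) =ᶠ[nhds x] deriv (v lam) := by
      filter_upwards [isOpen_Ioi.mem_nhds hx] with y hy
      exact mul_div_cancel_left₀ _ (hppos y hy).ne'
    exact (hdiv.congr heq).continuousWithinAt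
  -- FTC for the quasi-derivative
  have hftc : ∀ lam : ℝ, 0 ≤ lam → ∀ a b : ℝ, 0 < a → a ≤ b →
      p a * deriv (v lam) a - p b * deriv (v lam) b
        = ∫ y in a..b, lam * p y * v lam y := by
    intro lam hlam a b ha hab
    obtain ⟨hvc, hvd, hvode, hv0, hvg⟩ := hvsol lam hlam
    have hsub : Set.uIcc a b ⊆ Set.Ioi 0 := by
      rw [Set.uIcc_of_le hab]
      exact fun y hy => lt_of_lt_of_le ha hy.1
    have h1 : (∫ y in a..b, -(lam * p y * v lam y))
        = p b * deriv (v lam) b - p a * deriv (v lam) a := by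
      apply intervalIntegral.integral_eq_sub_of_hasDerivAt
      · intro y hy; exact hvode y (hsub hy)
      · apply ContinuousOn.intervalIntegrable
        apply ContinuousOn.neg
        exact (continuousOn_const.mul (hpcont.mono hsub)).mul
          (hvc.mono fun y hy => Set.mem_Ici.2 (le_of_lt (hsub hy)))
    rw [intervalIntegral.integral_neg] at h1
    linarith
  -- FTC for v itself
  have hvftc : ∀ lam : ℝ, 0 ≤ lam → ∀ a b : ℝ, 0 < a → a ≤ b →
      (∫ y in a..b, deriv (v lam) y) = v lam b - v lam a := by
    intro lam hlam a b ha hab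
    obtain ⟨hvc, hvd, hvode, hv0, hvg⟩ := hvsol lam hlam
    have hsub : Set.uIcc a b ⊆ Set.Ioi 0 := by
      rw [Set.uIcc_of_le hab]
      exact fun y hy => lt_of_lt_of_le ha hy.1
    apply intervalIntegral.integral_eq_sub_of_hasDerivAt
    · intro y hy; exact (hvd y (hsub hy)).hasDerivAt
    · exact ((hdc lam hlam).mono hsub).intervalIntegrable
  -- choose ε with v 1 ≥ 1/2 on [0, ε]
  have hv1cw : Tendsto (v 1) (nhdsWithin 0 (Set.Ici 0)) (nhds 1) := by
    have h : ContinuousWithinAt (v 1) (Set.Ici 0) 0 := hv1c 0 Set.self_mem_Ici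
    unfold ContinuousWithinAt at h
    rwa [hv10] at h
  have hev : {x : ℝ | 1 / 2 < v 1 x} ∈ nhdsWithin 0 (Set.Ici 0) :=
    hv1cw (Ioi_mem_nhds (by norm_num))
  obtain ⟨δ, hδ, hball⟩ := Metric.mem_nhdsWithin_iff.1 hev
  set ε : ℝ := δ / 2 with hεdef
  have hε : 0 < ε := by positivity
  have hv1half : ∀ x ∈ Set.Icc (0 : ℝ) ε, 1 / 2 ≤ v 1 x := by
    intro x hx
    refine le_of_lt (hball ⟨?_, hx.1⟩)
    rw [Metric.mem_ball, Real.dist_eq, sub_zero, abs_of_nonneg hx.1]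
    linarith [hx.2]
  -- the approximating sequence
  set a : ℕ → ℝ := fun n => ε / (n + 1) with hadef
  have han : ∀ n : ℕ, a n ∈ Set.Ioc 0 ε := by
    intro n
    constructor
    · positivity
    · rw [div_le_iff₀ (by positivity)]
      nlinarith [Nat.cast_nonneg (α := ℝ) n]
  have hseq0 : Tendsto a atTop (nhds 0) := by
    have h := tendsto_one_div_add_atTop_nhds_zero_nat (𝕜 := ℝ)
    have h2 := h.const_mul ε
    simp only [mul_zero] at h2
    refine h2.congr fun n => ?_
    rw [hadef]
    field_simp
  have hseqIn : Tendsto a atTop (nhdsWithin 0 (Set.Ioi 0)) :=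
    tendsto_nhdsWithin_of_tendsto_nhds_of_eventually_within _ hseq0
      (Eventually.of_forall fun n => (han n).1)
  -- integrability of p on (0, ε]
  have hpIcc : ∀ b : ℝ, 0 < b → b ≤ ε → IntegrableOn p (Set.Ioc b ε) := by
    intro b hb hbe
    have : ContinuousOn p (Set.Icc b ε) :=
      hpcont.mono fun y hy => lt_of_lt_of_le hb hy.1
    exact this.integrableOn_Icc.mono_set Set.Ioc_subset_Icc_self
  have hpInt : IntegrableOn p (Set.Ioc 0 ε) := by
    have hG : Tendsto (fun n => p (a n) * deriv (v 1) (a n)) atTop (nhds 0) :=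
      hv1g.comp hseqIn
    have hGev : ∀ᶠ n : ℕ in atTop, p (a n) * deriv (v 1) (a n) ≤ 1 :=
      hG.eventually (eventually_le_nhds one_pos)
    apply MeasureTheory.integrableOn_Ioc_of_intervalIntegral_norm_bounded_left
      (I := 2 * (1 + |p ε * deriv (v 1) ε|)) (a := a) (l := atTop)
      (fun n => hpIcc (a n) (han n).1 (han n).2) hseq0
    filter_upwards [hGev] with n hGn
    have hn := han n
    have h1 : ∫ x in Set.Ioc (a n) ε, ‖p x‖ = ∫ x in Set.Ioc (a n) ε, p x := by
      apply setIntegral_congr_fun measurableSet_Ioc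
      intro y hy
      exact Real.norm_of_nonneg (hppos y (lt_trans hn.1 hy.1)).le
    have h2 : ∫ x in Set.Ioc (a n) ε, p x ≤ ∫ x in Set.Ioc (a n) ε, 2 * (p x * v 1 x) := by
      apply setIntegral_mono_on (hpIcc (a n) hn.1 hn.2)
      · apply Integrable.const_mul
        apply MeasureTheory.Integrable.mono' (hpIcc (a n) hn.1 hn.2)
        · apply ContinuousOn.aestronglyMeasurable _ measurableSet_Ioc
          apply ContinuousOn.mul
          · exact hpcont.mono fun y hy => lt_trans hn.1 hy.1
          · exact hv1c.mono fun y hy => (lt_trans hn.1 hy.1).le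
        · refine (ae_restrict_iff' measurableSet_Ioc).2 (Eventually.of_forall fun y hy => ?_)
          have hb := hvbd 1 zero_le_one y (lt_trans hn.1 hy.1).le
          have hp := hppos y (lt_trans hn.1 hy.1)
          rw [Real.norm_eq_abs, abs_mul, abs_of_pos hp]
          nlinarith [abs_nonneg (v 1 y)]
      · exact measurableSet_Ioc
      · intro y hy
        have h12 := hv1half y ⟨(lt_trans hn.1 hy.1).le, hy.2⟩
        have hp := hppos y (lt_trans hn.1 hy.1)
        nlinarith
    have h3 : ∫ x in Set.Ioc (a n) ε, 2 * (p x * v 1 x)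
        = 2 * ∫ x in Set.Ioc (a n) ε, p x * v 1 x := integral_const_mul 2 _
    have h4 : ∫ x in Set.Ioc (a n) ε, p x * v 1 x
        = p (a n) * deriv (v 1) (a n) - p ε * deriv (v 1) ε := by
      have := hftc 1 zero_le_one (a n) ε hn.1 hn.2
      rw [intervalIntegral.integral_of_le hn.2] at this
      simp only [one_mul] at this
      linarith
    rw [h1]
    rw [h4] at h3
    calc ∫ x in Set.Ioc (a n) ε, p x ≤ _ := h2
    _ = 2 * (p (a n) * deriv (v 1) (a n) - p ε * deriv (v 1) ε) := h3
    _ ≤ 2 * (1 + |p ε * deriv (v 1) ε|) := by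
        nlinarith [neg_abs_le (p ε * deriv (v 1) ε)]
  -- integrability of p * v lam on (0, ε]
  have hpvInt : ∀ lam : ℝ, 0 ≤ lam →
      IntegrableOn (fun y => p y * v lam y) (Set.Ioc 0 ε) := by
    intro lam hlam
    obtain ⟨hvc, _, _, _, _⟩ := hvsol lam hlam
    apply MeasureTheory.Integrable.mono' hpInt
    · apply ContinuousOn.aestronglyMeasurable _ measurableSet_Ioc
      exact (hpcont.mono fun y hy => hy.1).mul (hvc.mono fun y hy => hy.1.le)
    · refine (ae_restrict_iff' measurableSet_Ioc).2 (Eventually.of_forall fun y hy => ?_)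
      have hb := hvbd lam hlam y hy.1.le
      have hp := hppos y hy.1
      rw [Real.norm_eq_abs, abs_mul, abs_of_pos hp]
      nlinarith [abs_nonneg (v lam y)]
  -- measure of small sets tends to zero
  have hμs : ∀ S : Set ℝ, Tendsto (fun b : ℝ => (volume.restrict S) (Set.Ioc 0 b))
      (nhdsWithin 0 (Set.Ioi 0)) (nhds 0) := by
    intro S
    apply tendsto_of_tendsto_of_tendsto_of_le_of_le (g := fun _ => (0 : ENNReal))
      (h := fun b => ENNReal.ofReal b) tendsto_const_nhds
    · have h1 : Tendsto (fun b : ℝ => b) (nhdsWithin 0 (Set.Ioi 0)) (nhds 0) :=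
        tendsto_id.mono_left nhdsWithin_le_nhds
      have := (ENNReal.continuous_ofReal.tendsto 0).comp h1
      rw [ENNReal.ofReal_zero] at this
      exact this
    · intro b; exact zero_le
    · intro b
      calc (volume.restrict S) (Set.Ioc 0 b) ≤ volume (Set.Ioc 0 b) :=
            Measure.restrict_apply_le S _
      _ = ENNReal.ofReal b := by rw [Real.volume_Ioc, sub_zero]
  -- the key identity : p x v'(x) = -lam ∫_(0,x] p v
  have hkey : ∀ lam : ℝ, 0 ≤ lam → ∀ x ∈ Set.Ioc (0 : ℝ) ε,
      p x * deriv (v lam) x = -(lam * ∫ y in Set.Ioc 0 x, p y * v lam y) := by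
    intro lam hlam x hx
    obtain ⟨hvc, hvd, hvode, hv0, hvg⟩ := hvsol lam hlam
    have hpv := hpvInt lam hlam
    have htend0 : Tendsto (fun b : ℝ => ∫ y in Set.Ioc 0 b, p y * v lam y)
        (nhdsWithin 0 (Set.Ioi 0)) (nhds 0) := by
      have h := hpv.tendsto_setIntegral_nhds_zero (hμs (Set.Ioc 0 ε))
      refine h.congr' ?_
      filter_upwards [Ioc_mem_nhdsGT hε] with b hb
      rw [Measure.restrict_restrict measurableSet_Ioc,
        Set.inter_eq_self_of_subset_left (Set.Ioc_subset_Ioc_right hb.2)]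
    have hconst : ∀ᶠ b in nhdsWithin 0 (Set.Ioi 0),
        p x * deriv (v lam) x
          = p b * deriv (v lam) b - lam * (∫ y in Set.Ioc 0 x, p y * v lam y)
            + lam * ∫ y in Set.Ioc 0 b, p y * v lam y := by
      filter_upwards [Ioo_mem_nhdsGT hx.1] with b hb
      have h1 := hftc lam hlam b x hb.1 hb.2.le
      have hsplit : (∫ y in Set.Ioc 0 x, p y * v lam y)
          = (∫ y in Set.Ioc 0 b, p y * v lam y) + ∫ y in Set.Ioc b x, p y * v lam y := by
        rw [← MeasureTheory.setIntegral_union (Set.Ioc_disjoint_Ioc_of_le le_rfl) measurableSet_Ioc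
          (hpv.mono_set (Set.Ioc_subset_Ioc_right (hb.2.le.trans hx.2)))
          (hpv.mono_set fun y hy => ⟨lt_trans hb.1 hy.1, hy.2.trans hx.2⟩),
          Set.Ioc_union_Ioc_eq_Ioc hb.1.le hb.2.le]
      have h2 : (∫ y in b..x, lam * p y * v lam y)
          = lam * ∫ y in Set.Ioc b x, p y * v lam y := by
        rw [intervalIntegral.integral_of_le hb.2.le]
        simp_rw [mul_assoc]
        exact integral_const_mul lam _
      rw [h2] at h1
      nlinarith [hsplit]
    have htend : Tendsto (fun b : ℝ =>
        p b * deriv (v lam) b - lam * (∫ y in Set.Ioc 0 x, p y * v lam y)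
          + lam * ∫ y in Set.Ioc 0 b, p y * v lam y)
        (nhdsWithin 0 (Set.Ioi 0))
        (nhds (0 - lam * (∫ y in Set.Ioc 0 x, p y * v lam y) + lam * 0)) :=
      (hvg.sub_const _).add (htend0.const_mul lam)
    have := tendsto_nhds_unique (htend.congr' (hconst.mono fun b hb => hb.symm))
      tendsto_const_nhds
    rw [← this]; ring
  -- v 1 decreases, with quantitative bound
  have hv1keyP : ∀ y ∈ Set.Ioc (0 : ℝ) ε,
      (1 / 2) * (∫ z in Set.Ioc 0 y, p z) ≤ p y * -(deriv (v 1) y) ∧ deriv (v 1) y ≤ 0 := by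
    intro y hy
    have hk := hkey 1 zero_le_one y hy
    simp only [one_mul] at hk
    have hmono : (1 / 2) * (∫ z in Set.Ioc 0 y, p z) ≤ ∫ z in Set.Ioc 0 y, p z * v 1 z := by
      rw [← integral_const_mul]
      apply setIntegral_mono_on ((hpInt.mono_set (Set.Ioc_subset_Ioc_right hy.2)).const_mul _)
        ((hpvInt 1 zero_le_one).mono_set (Set.Ioc_subset_Ioc_right hy.2)) measurableSet_Ioc
      intro z hz
      have h12 := hv1half z ⟨hz.1.le, hz.2.trans hy.2⟩
      have hp := hppos z hz.1
      nlinarith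
    have hPnn : 0 ≤ ∫ z in Set.Ioc 0 y, p z :=
      setIntegral_nonneg measurableSet_Ioc fun z hz => (hppos z hz.1).le
    have hp := hppos y hy.1
    constructor
    · nlinarith
    · nlinarith
  -- pointwise derivative comparison
  have hder_bd : ∀ lam : ℝ, 0 ≤ lam → ∀ y ∈ Set.Ioc (0 : ℝ) ε,
      |deriv (v lam) y| ≤ 2 * lam * -(deriv (v 1) y) := by
    intro lam hlam y hy
    have hk := hkey lam hlam y hy
    have habs : p y * |deriv (v lam) y| ≤ lam * ∫ z in Set.Ioc 0 y, p z := by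
      have h1 : |p y * deriv (v lam) y| = lam * |∫ z in Set.Ioc 0 y, p z * v lam z| := by
        rw [hk, abs_neg, abs_mul, abs_of_nonneg hlam]
      have h2 : |∫ z in Set.Ioc 0 y, p z * v lam z| ≤ ∫ z in Set.Ioc 0 y, p z := by
        have hIoc := (hpvInt lam hlam).mono_set (Set.Ioc_subset_Ioc_right hy.2)
        calc |∫ z in Set.Ioc 0 y, p z * v lam z| ≤ ∫ z in Set.Ioc 0 y, |p z * v lam z| := by
              simpa only [Real.norm_eq_abs] using
                MeasureTheory.norm_integral_le_integral_norm (μ := volume.restrict (Set.Ioc 0 y))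
                  (fun z => p z * v lam z)
        _ ≤ ∫ z in Set.Ioc 0 y, p z := by
            apply setIntegral_mono_on hIoc.abs
              (hpInt.mono_set (Set.Ioc_subset_Ioc_right hy.2)) measurableSet_Ioc
            intro z hz
            have hb := hvbd lam hlam z hz.1.le
            have hp := hppos z hz.1
            rw [abs_mul, abs_of_pos hp]
            nlinarith [abs_nonneg (v lam z)]
      rw [abs_mul, abs_of_pos (hppos y hy.1)] at h1
      nlinarith
    obtain ⟨hP, hd10⟩ := hv1keyP y hy
    have hp := hppos y hy.1
    nlinarith [abs_nonneg (deriv (v lam) y)]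
  -- integrability of deriv (v 1) on (0, ε]
  have hd1Int : IntegrableOn (deriv (v 1)) (Set.Ioc 0 ε) := by
    apply MeasureTheory.integrableOn_Ioc_of_intervalIntegral_norm_bounded_left
      (I := 2) (a := a) (l := atTop)
      (fun n => ((hdc 1 zero_le_one).mono fun y hy =>
        lt_of_lt_of_le (han n).1 hy.1).integrableOn_Icc.mono_set Set.Ioc_subset_Icc_self)
      hseq0
    apply Eventually.of_forall
    intro n
    have hn := han n
    have h1 : ∫ x in Set.Ioc (a n) ε, ‖deriv (v 1) x‖
        = ∫ x in Set.Ioc (a n) ε, -(deriv (v 1) x) := by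
      apply setIntegral_congr_fun measurableSet_Ioc
      intro y hy
      exact Real.norm_of_nonpos (hv1keyP y ⟨lt_trans hn.1 hy.1, hy.2⟩).2
    have h2 : ∫ x in Set.Ioc (a n) ε, -(deriv (v 1) x)
        = -(v 1 ε - v 1 (a n)) := by
      rw [integral_neg, ← intervalIntegral.integral_of_le hn.2, hvftc 1 zero_le_one (a n) ε hn.1 hn.2]
    rw [h1, h2]
    have hb1 := hvbd 1 zero_le_one ε hε.le
    have hb2 := hvbd 1 zero_le_one (a n) hn.1.le
    rw [abs_le] at hb1 hb2
    linarith [hb1.1, hb1.2, hb2.1, hb2.2]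
  -- integrability of deriv (v lam) on (0, ε]
  have hdInt : ∀ lam : ℝ, 0 ≤ lam → IntegrableOn (deriv (v lam)) (Set.Ioc 0 ε) := by
    intro lam hlam
    apply MeasureTheory.Integrable.mono' ((hd1Int.neg).const_mul (2 * lam))
    · exact ((hdc lam hlam).mono fun y hy => hy.1).aestronglyMeasurable measurableSet_Ioc
    · refine (ae_restrict_iff' measurableSet_Ioc).2 (Eventually.of_forall fun y hy => ?_)
      have := hder_bd lam hlam y hy
      rw [Real.norm_eq_abs]
      calc |deriv (v lam) y| ≤ 2 * lam * -(deriv (v 1) y) := this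
      _ = 2 * lam * (-deriv (v 1)) y := by simp
  -- the representation 1 - v lam x = -∫_(0,x] deriv (v lam)
  have hrep : ∀ lam : ℝ, 0 ≤ lam → ∀ x ∈ Set.Ioc (0 : ℝ) ε,
      1 - v lam x = -(∫ y in Set.Ioc 0 x, deriv (v lam) y) := by
    intro lam hlam x hx
    obtain ⟨hvc, hvd, hvode, hv0, hvg⟩ := hvsol lam hlam
    have hd := hdInt lam hlam
    have htend0 : Tendsto (fun b : ℝ => ∫ y in Set.Ioc 0 b, deriv (v lam) y)
        (nhdsWithin 0 (Set.Ioi 0)) (nhds 0) := by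
      have h := hd.tendsto_setIntegral_nhds_zero (hμs (Set.Ioc 0 ε))
      refine h.congr' ?_
      filter_upwards [Ioc_mem_nhdsGT hε] with b hb
      rw [Measure.restrict_restrict measurableSet_Ioc,
        Set.inter_eq_self_of_subset_left (Set.Ioc_subset_Ioc_right hb.2)]
    have hv0tend : Tendsto (v lam) (nhdsWithin 0 (Set.Ioi 0)) (nhds 1) := by
      have h : ContinuousWithinAt (v lam) (Set.Ici 0) 0 := hvc 0 Set.self_mem_Ici
      unfold ContinuousWithinAt at h
      rw [hv0] at h
      exact h.mono_left (nhdsWithin_mono 0 Set.Ioi_subset_Ici_self)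
    have hconst : ∀ᶠ b in nhdsWithin 0 (Set.Ioi 0),
        v lam x = v lam b + (∫ y in Set.Ioc 0 x, deriv (v lam) y)
          - ∫ y in Set.Ioc 0 b, deriv (v lam) y := by
      filter_upwards [Ioo_mem_nhdsGT hx.1] with b hb
      have h1 := hvftc lam hlam b x hb.1 hb.2.le
      rw [intervalIntegral.integral_of_le hb.2.le] at h1
      have hsplit : (∫ y in Set.Ioc 0 x, deriv (v lam) y)
          = (∫ y in Set.Ioc 0 b, deriv (v lam) y) + ∫ y in Set.Ioc b x, deriv (v lam) y := by
        rw [← MeasureTheory.setIntegral_union (Set.Ioc_disjoint_Ioc_of_le le_rfl) measurableSet_Ioc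
          (hd.mono_set (Set.Ioc_subset_Ioc_right (hb.2.le.trans hx.2)))
          (hd.mono_set fun y hy => ⟨lt_trans hb.1 hy.1, hy.2.trans hx.2⟩),
          Set.Ioc_union_Ioc_eq_Ioc hb.1.le hb.2.le]
      linarith
    have htend : Tendsto (fun b : ℝ => v lam b + (∫ y in Set.Ioc 0 x, deriv (v lam) y)
          - ∫ y in Set.Ioc 0 b, deriv (v lam) y)
        (nhdsWithin 0 (Set.Ioi 0))
        (nhds (1 + (∫ y in Set.Ioc 0 x, deriv (v lam) y) - 0)) :=
      (hv0tend.add_const _).sub htend0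
    have := tendsto_nhds_unique (htend.congr' (hconst.mono fun b hb => hb.symm))
      tendsto_const_nhds
    -- this : 1 + ∫ - 0 = v lam x
    linarith [this]
  -- the main pointwise bound
  have hmain : ∀ lam : ℝ, 0 ≤ lam → ∀ x ∈ Set.Ioc (0 : ℝ) ε,
      1 - v lam x ≤ 2 * lam * (1 - v 1 x) := by
    intro lam hlam x hx
    rw [hrep lam hlam x hx, hrep 1 zero_le_one x hx]
    have hdl := (hdInt lam hlam).mono_set (Set.Ioc_subset_Ioc_right hx.2)
    have hd1 := hd1Int.mono_set (Set.Ioc_subset_Ioc_right hx.2)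
    have hmono : (∫ y in Set.Ioc 0 x, -(deriv (v lam) y))
        ≤ ∫ y in Set.Ioc 0 x, 2 * lam * -(deriv (v 1) y) := by
      apply setIntegral_mono_on hdl.neg ((hd1.neg).const_mul _) measurableSet_Ioc
      intro y hy
      have h := hder_bd lam hlam y ⟨hy.1, hy.2.trans hx.2⟩
      exact (neg_le_abs _).trans h
    rw [integral_neg] at hmono
    have hrw : (∫ y in Set.Ioc 0 x, 2 * lam * -(deriv (v 1) y))
        = 2 * lam * -(∫ y in Set.Ioc 0 x, deriv (v 1) y) := by
      rw [← integral_neg]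
      exact integral_const_mul _ _
    rw [hrw] at hmono
    linarith
  -- now integrate against τ
  have hae : ∀ᵐ x ∂τ, x ∈ Set.Ioi (0 : ℝ) := by
    rw [ae_iff]
    simpa [Set.compl_def] using hτconc
  have hτres : τ.restrict (Set.Ioi (0 : ℝ)) = τ := Measure.restrict_eq_self_of_ae_mem hae
  have hv1nonneg : ∀ᵐ x ∂τ, 0 ≤ 1 - v 1 x := by
    filter_upwards [hae] with x hx
    have := hvbd 1 zero_le_one x (le_of_lt hx)
    rw [abs_le] at this
    linarith [this.2]
  set K : ℝ := ∫ x, (1 - v 1 x) ∂τ with hK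
  have hKnn : 0 ≤ K := integral_nonneg_of_ae hv1nonneg
  set T : ℝ := (τ (Set.Ici ε)).toReal with hT
  have hTnn : 0 ≤ T := ENNReal.toReal_nonneg
  refine ⟨c + 2 * K + 2 * T + 1, by linarith, ?_⟩
  intro lam hlam
  have hint := hτint lam hlam
  have hsplit : (∫ x, (1 - v lam x) ∂τ)
      = (∫ x in Set.Ioc 0 ε, (1 - v lam x) ∂τ) + ∫ x in Set.Ioi ε, (1 - v lam x) ∂τ := by
    conv_lhs => rw [← hτres]
    rw [← Set.Ioc_union_Ioi_eq_Ioi hε.le]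
    exact MeasureTheory.setIntegral_union
      (Set.disjoint_left.2 fun y hy1 hy2 => absurd hy2 (not_lt.2 hy1.2))
      measurableSet_Ioi hint.integrableOn hint.integrableOn
  have h1 : (∫ x in Set.Ioc 0 ε, (1 - v lam x) ∂τ) ≤ 2 * lam * K := by
    have ha1 : (∫ x in Set.Ioc 0 ε, (1 - v lam x) ∂τ)
        ≤ ∫ x in Set.Ioc 0 ε, 2 * lam * (1 - v 1 x) ∂τ := by
      apply setIntegral_mono_on hint.integrableOn
        (((hτint 1 zero_le_one).const_mul (2 * lam)).integrableOn) measurableSet_Ioc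
      exact fun x hx => hmain lam hlam x hx
    have ha2 : (∫ x in Set.Ioc 0 ε, 2 * lam * (1 - v 1 x) ∂τ)
        = 2 * lam * ∫ x in Set.Ioc 0 ε, (1 - v 1 x) ∂τ := integral_const_mul _ _
    have ha3 : (∫ x in Set.Ioc 0 ε, (1 - v 1 x) ∂τ) ≤ K :=
      setIntegral_le_integral (hτint 1 zero_le_one) hv1nonneg
    have h2lam : 0 ≤ 2 * lam := by linarith
    calc (∫ x in Set.Ioc 0 ε, (1 - v lam x) ∂τ) ≤ _ := ha1
    _ = 2 * lam * ∫ x in Set.Ioc 0 ε, (1 - v 1 x) ∂τ := ha2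
    _ ≤ 2 * lam * K := by nlinarith
  have h2 : (∫ x in Set.Ioi ε, (1 - v lam x) ∂τ) ≤ 2 * T := by
    have hfinIoi : τ (Set.Ioi ε) < ⊤ :=
      lt_of_le_of_lt (measure_mono Set.Ioi_subset_Ici_self) (hτfin ε hε)
    have hconst2 : IntegrableOn (fun _ : ℝ => (2 : ℝ)) (Set.Ioi ε) τ := by
      exact integrableOn_const hfinIoi.ne
    have ha1 : (∫ x in Set.Ioi ε, (1 - v lam x) ∂τ) ≤ ∫ _ in Set.Ioi ε, (2 : ℝ) ∂τ := by
      apply setIntegral_mono_on hint.integrableOn hconst2 measurableSet_Ioi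
      intro x hx
      have := hvbd lam hlam x (le_of_lt (lt_trans hε hx))
      rw [abs_le] at this
      linarith [this.1]
    have ha2 : (∫ _ in Set.Ioi ε, (2 : ℝ) ∂τ) = (τ (Set.Ioi ε)).toReal * 2 := by
      rw [setIntegral_const, smul_eq_mul]; rfl
    have ha3 : (τ (Set.Ioi ε)).toReal ≤ T :=
      ENNReal.toReal_mono (hτfin ε hε).ne (measure_mono Set.Ioi_subset_Ici_self)
    calc (∫ x in Set.Ioi ε, (1 - v lam x) ∂τ) ≤ _ := ha1
    _ = (τ (Set.Ioi ε)).toReal * 2 := ha2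
    _ ≤ 2 * T := by linarith
  rw [hsplit]
  nlinarith [mul_nonneg hlam hKnn, mul_nonneg hlam hTnn, mul_nonneg hc hlam]
end
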